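/- Let p be an odd prime and let r ≥ 3 be odd. Define eᵢ = p−1 for 1 ≤ i ≤ r−2, and let e_{r−1}, e_r be positive integers less than p with e_{r−1} + e_r > p and e_{r−1} + e_r odd. Then the tuple (e₁,…,e_r) is not numerically p-admissible. -/
import Mathlib


/-- The triangle inequality for a triple of naturals. -/
def Triangle (a b c : ℕ) : Prop := a ≤ b + c ∧ b ≤ a + c ∧ c ≤ a + b

/-- Numerical `p`-admissibility for an `r`-tuple `(e 1, …, e r)` with all `eᵢ < p`. -/
def NumericallyPAdmissible (p r : ℕ) (e : ℕ → ℕ) : Prop :=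
  ∃ e' : ℕ → ℕ,
    e' 1 = e 1 ∧ e' (r - 1) = e r ∧
    (∀ m, 2 ≤ m → m ≤ r - 2 → 0 < e' m ∧ ¬ p ∣ e' m) ∧
    (∀ m, 1 ≤ m → m < r - 1 →
      Triangle (e' m) (e (m + 1)) (e' (m + 1)) ∧
      Odd (e' m + e (m + 1) + e' (m + 1)) ∧
      e' m + e (m + 1) + e' (m + 1) < 2 * p)

/-- Example 4.3 (odd `r`): for `p` an odd prime and odd `r ≥ 3`, the tuple with
`eᵢ = p − 1` for `i ≤ r − 2` and `e_{r−1} + e_r > p` odd is not numerically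
`p`-admissible. -/
theorem example_tuple_not_admissible_odd (p : ℕ) (hp : p.Prime) (hodd : Odd p)
    (r : ℕ) (hr : 3 ≤ r) (hrodd : Odd r) (e : ℕ → ℕ)
    (he : ∀ i, 1 ≤ i → i ≤ r - 2 → e i = p - 1)
    (he1 : 0 < e (r - 1)) (he1p : e (r - 1) < p)
    (he2 : 0 < e r) (he2p : e r < p)
    (hgt : p < e (r - 1) + e r) (hsumodd : Odd (e (r - 1) + e r)) :
    ¬ NumericallyPAdmissible p r e := by
  rintro ⟨e', h1, h2, hpos, hcon⟩
  obtain ⟨q, hq⟩ := hodd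
  have hp2 : 2 ≤ p := hp.two_le
  have hp3 : 3 ≤ p := by omega
  have key : ∀ m, 1 ≤ m → m ≤ r - 2 →
      (Odd m → e' m = p - 1) ∧ (¬ Odd m → e' m = 1) := by
    intro m
    induction m using Nat.strong_induction_on with
    | _ m ih =>
      intro hm1 hm2
      rcases Nat.eq_or_lt_of_le hm1 with h | h
      · constructor
        · intro _
          rw [← h, h1, he 1 le_rfl (by omega)]
        · intro hno
          exact absurd (h ▸ odd_one) hno
      · -- m ≥ 2
        have hn1 : 1 ≤ m - 1 := by omega
        have hn2 : m - 1 ≤ r - 2 := by omega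
        have hih := ih (m - 1) (by omega) hn1 hn2
        have hem : e m = p - 1 := he m (by omega) hm2
        obtain ⟨htri, hoddS, hltS⟩ := hcon (m - 1) hn1 (by omega)
        have hmm : m - 1 + 1 = m := by omega
        rw [hmm] at htri hoddS hltS
        obtain ⟨t, ht⟩ := hoddS
        by_cases hmo : Odd m
        · -- m odd, m-1 even, e'(m-1) = 1, triangle (1, p-1, e' m)
          have hprev : e' (m - 1) = 1 := by
            apply hih.2
            rw [Nat.odd_iff] at hmo ⊢
            omega
          rw [hprev, hem] at htri ht hltS
          obtain ⟨ht1, ht2, ht3⟩ := htri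
          constructor
          · intro _; omega
          · intro h'; exact absurd hmo h'
        · -- m even, m-1 odd, e'(m-1) = p-1
          have hprev : e' (m - 1) = p - 1 := by
            apply hih.1
            rw [Nat.odd_iff] at hmo ⊢
            omega
          have hposm : 0 < e' m := (hpos m (by omega) hm2).1
          rw [hprev, hem] at hltS
          constructor
          · intro h'; exact absurd h' hmo
          · intro _; omega
  have hr2odd : Odd (r - 2) := by
    obtain ⟨k, hk⟩ := hrodd
    exact ⟨k - 1, by omega⟩
  have hk := (key (r - 2) (by omega) le_rfl).1 hr2odd
  obtain ⟨_, _, hlt⟩ := hcon (r - 2) (by omega) (by omega)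
  have hre : r - 2 + 1 = r - 1 := by omega
  rw [hre, hk, h2] at hlt
  omega
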